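/- For g ∈ {0,1}, let μ_g be a Borel probability measure on [0,1] (the score distribution of group g), let (Φ_g, 𝒜_g, ν_g) be a probability space, let F_g : [0,1] × Φ_g → [0,1] be jointly measurable, and let f*_g : [0,1] → [0,1] be measurable. Define, for a measurable h : [0,1] → [0,1], the accuracy functional A_g(h) = ∫_{[0,1]} ((1 − h(s))·1{s < 1/2} + h(s)·1{s ≥ 1/2}) dμ_g(s); set f̄_g(s) = ∫_{Φ_g} F_g(s,φ) dν_g(φ), E_φθ_g = ∫_{Φ_g} A_g(F_g(·,φ)) dν_g(φ), E_φΔ = E_φθ_1 − E_φθ_0, and Δ* = A_1(f*_1) − A_0(f*_0). Then |E_φΔ − Δ*| ≤ ∫_{[0,1]} |f̄_0(s) − f*_0(s)| dμ_0(s) + ∫_{[0,1]} |f̄_1(s) − f*_1(s)| dμ_1(s). -/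

import Mathlib

open MeasureTheory Set

/-- The accuracy functional: given a score distribution `μ` on `[0,1]` and a calibration
function `h`, `acc μ h = ∫ ((1 - h s)·1{s < 1/2} + h s·1{s ≥ 1/2}) dμ(s)`. -/
noncomputable def acc (μ : Measure (Icc (0:ℝ) 1)) (h : Icc (0:ℝ) 1 → ℝ) : ℝ :=
  ∫ s, ((1 - h s) * (if (s : ℝ) < 1/2 then (1:ℝ) else 0)
      + h s * (if (1:ℝ)/2 ≤ (s : ℝ) then (1:ℝ) else 0)) ∂μ

namespace AccAux

noncomputable def accA (s : Icc (0:ℝ) 1) : ℝ := if (s : ℝ) < 1/2 then (1:ℝ) else 0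

noncomputable def accW (s : Icc (0:ℝ) 1) : ℝ :=
  (if (1:ℝ)/2 ≤ (s : ℝ) then (1:ℝ) else 0) - (if (s : ℝ) < 1/2 then (1:ℝ) else 0)

lemma measurable_accA : Measurable accA := by
  apply Measurable.ite (measurableSet_lt measurable_subtype_coe measurable_const) <;>
    exact measurable_const

lemma measurable_accW : Measurable accW := by
  apply Measurable.sub
  · apply Measurable.ite (measurableSet_le measurable_const measurable_subtype_coe) <;>
      exact measurable_const
  · apply Measurable.ite (measurableSet_lt measurable_subtype_coe measurable_const) <;>
      exact measurable_const

lemma abs_accW (s : Icc (0:ℝ) 1) : |accW s| = 1 := by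
  unfold accW
  by_cases h : (s : ℝ) < 1/2
  · rw [if_pos h, if_neg (by linarith)]; norm_num
  · rw [if_neg h, if_pos (by linarith)]; norm_num

lemma abs_accA (s : Icc (0:ℝ) 1) : |accA s| ≤ 1 := by
  unfold accA; split <;> norm_num

lemma abs_int_le {α : Type*} [MeasurableSpace α] (μ : Measure α) (f : α → ℝ) :
    |∫ x, f x ∂μ| ≤ ∫ x, |f x| ∂μ := by
  simpa [Real.norm_eq_abs] using norm_integral_le_integral_norm (μ := μ) f

lemma integrable_of_bdd {α : Type*} [MeasurableSpace α] {μ : Measure α} [IsFiniteMeasure μ]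
    {f : α → ℝ} (hf : Measurable f) {C : ℝ} (h : ∀ x, |f x| ≤ C) : Integrable f μ :=
  Integrable.mono' (integrable_const C) hf.aestronglyMeasurable
    (Filter.Eventually.of_forall fun x => by simpa using h x)

lemma acc_eq (μ : Measure (Icc (0:ℝ) 1)) [IsProbabilityMeasure μ]
    {h : Icc (0:ℝ) 1 → ℝ} (hm : Measurable h) (hb : ∀ s, |h s| ≤ 1) :
    acc μ h = (∫ s, accA s ∂μ) + ∫ s, h s * accW s ∂μ := by
  unfold acc
  rw [← integral_add (integrable_of_bdd measurable_accA abs_accA)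
      (integrable_of_bdd (f := fun s => h s * accW s) (hm.mul measurable_accW)
        (fun s => by
          rw [abs_mul, abs_accW, mul_one]; exact hb s))]
  apply integral_congr_ae
  filter_upwards with s
  unfold accA accW
  ring

lemma acc_sub_abs_le (μ : Measure (Icc (0:ℝ) 1)) [IsProbabilityMeasure μ]
    {h h' : Icc (0:ℝ) 1 → ℝ} (hm : Measurable h) (hb : ∀ s, |h s| ≤ 1)
    (hm' : Measurable h') (hb' : ∀ s, |h' s| ≤ 1) :
    |acc μ h - acc μ h'| ≤ ∫ s, |h s - h' s| ∂μ := by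
  rw [acc_eq μ hm hb, acc_eq μ hm' hb']
  have key : (∫ s, accA s ∂μ) + (∫ s, h s * accW s ∂μ)
      - ((∫ s, accA s ∂μ) + ∫ s, h' s * accW s ∂μ)
      = ∫ s, (h s - h' s) * accW s ∂μ := by
    have hint : ∀ (g : Icc (0:ℝ) 1 → ℝ), Measurable g → (∀ s, |g s| ≤ 1) →
        Integrable (fun s => g s * accW s) μ := fun g hg hgb =>
      integrable_of_bdd (hg.mul measurable_accW)
        (fun s => by rw [abs_mul, abs_accW, mul_one]; exact hgb s)
    rw [add_sub_add_left_eq_sub, ← integral_sub (hint h hm hb) (hint h' hm' hb')]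
    apply integral_congr_ae
    filter_upwards with s
    ring
  rw [key]
  calc |∫ s, (h s - h' s) * accW s ∂μ| ≤ ∫ s, |(h s - h' s) * accW s| ∂μ :=
        abs_int_le _ _
    _ = ∫ s, |h s - h' s| ∂μ := by
        apply integral_congr_ae
        filter_upwards with s
        rw [abs_mul, abs_accW, mul_one]

lemma acc_integral_eq {Φ : Type*} [MeasurableSpace Φ]
    (μ : Measure (Icc (0:ℝ) 1)) [IsProbabilityMeasure μ]
    (ν : Measure Φ) [IsProbabilityMeasure ν]
    (F : Icc (0:ℝ) 1 → Φ → ℝ) (hF : Measurable (Function.uncurry F))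
    (hFr : ∀ s φ, F s φ ∈ Icc (0:ℝ) 1) :
    (∫ φ, acc μ (fun s => F s φ) ∂ν) = acc μ (fun s => ∫ φ, F s φ ∂ν) := by
  have hFb : ∀ s φ, |F s φ| ≤ 1 := fun s φ =>
    abs_le.mpr ⟨by linarith [(hFr s φ).1], (hFr s φ).2⟩
  have hFm : ∀ φ, Measurable (fun s => F s φ) := fun φ =>
    hF.comp (measurable_id.prodMk measurable_const)
  have hbar_m : Measurable (fun s => ∫ φ, F s φ ∂ν) :=
    (hF.stronglyMeasurable.integral_prod_right').measurable
  have hbar_b : ∀ s, |∫ φ, F s φ ∂ν| ≤ 1 := fun s => by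
    calc |∫ φ, F s φ ∂ν| ≤ ∫ φ, |F s φ| ∂ν := abs_int_le _ _
      _ ≤ ∫ _φ, (1:ℝ) ∂ν := integral_mono
            (integrable_of_bdd (hF.comp (measurable_const.prodMk measurable_id)) (fun φ => hFb s φ)).abs
            (integrable_const 1) (fun φ => hFb s φ)
      _ = 1 := by simp
  set g : Φ → Icc (0:ℝ) 1 → ℝ := fun φ s => F s φ * accW s with hg
  have hg_m : Measurable (Function.uncurry g) := by
    have : Function.uncurry g = fun p : Φ × Icc (0:ℝ) 1 =>
        (Function.uncurry F) (p.2, p.1) * accW p.2 := rfl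
    rw [this]
    exact (hF.comp (measurable_snd.prodMk measurable_fst)).mul
      (measurable_accW.comp measurable_snd)
  have hg_b : ∀ p : Φ × Icc (0:ℝ) 1, |Function.uncurry g p| ≤ 1 := fun p => by
    simp only [Function.uncurry, hg, abs_mul, abs_accW, mul_one]
    exact hFb p.2 p.1
  have hg_int : Integrable (Function.uncurry g) (ν.prod μ) := integrable_of_bdd hg_m hg_b
  have swap : (∫ φ, ∫ s, g φ s ∂μ ∂ν) = ∫ s, ∫ φ, g φ s ∂ν ∂μ :=
    integral_integral_swap hg_int
  have inner_m : Measurable (fun φ => ∫ s, g φ s ∂μ) :=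
    (hg_m.stronglyMeasurable.integral_prod_right').measurable
  have inner_b : ∀ φ, |∫ s, g φ s ∂μ| ≤ 1 := fun φ => by
    calc |∫ s, g φ s ∂μ| ≤ ∫ s, |g φ s| ∂μ := abs_int_le _ _
      _ ≤ ∫ _s, (1:ℝ) ∂μ := integral_mono
            (integrable_of_bdd ((hg_m.comp (measurable_const.prodMk measurable_id)))
              (fun s => hg_b (φ, s))).abs
            (integrable_const 1) (fun s => hg_b (φ, s))
      _ = 1 := by simp
  calc (∫ φ, acc μ (fun s => F s φ) ∂ν)
      = ∫ φ, ((∫ s, accA s ∂μ) + ∫ s, g φ s ∂μ) ∂ν := by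
        apply integral_congr_ae
        filter_upwards with φ
        exact acc_eq μ (hFm φ) (fun s => hFb s φ)
    _ = (∫ s, accA s ∂μ) + ∫ φ, ∫ s, g φ s ∂μ ∂ν := by
        rw [integral_add (integrable_const _) (integrable_of_bdd inner_m inner_b)]
        simp
    _ = (∫ s, accA s ∂μ) + ∫ s, ∫ φ, g φ s ∂ν ∂μ := by rw [swap]
    _ = (∫ s, accA s ∂μ) + ∫ s, (∫ φ, F s φ ∂ν) * accW s ∂μ := by
        congr 1
        apply integral_congr_ae
        filter_upwards with s
        simp only [hg]
        rw [integral_mul_const]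
    _ = acc μ (fun s => ∫ φ, F s φ ∂ν) := (acc_eq μ hbar_m hbar_b).symm

end AccAux

/-- Lemma 2.1 of the paper: the absolute error of the expected estimate of the group-fairness
metric Δ (difference of groupwise accuracies) is bounded by the sum of the two groupwise
expected L1 calibration errors. -/
theorem expected_delta_error_le_sum_calibration_errors
    {Φ₀ Φ₁ : Type*} [MeasurableSpace Φ₀] [MeasurableSpace Φ₁]
    (μ₀ μ₁ : Measure (Icc (0:ℝ) 1)) [IsProbabilityMeasure μ₀] [IsProbabilityMeasure μ₁]
    (ν₀ : Measure Φ₀) [IsProbabilityMeasure ν₀]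
    (ν₁ : Measure Φ₁) [IsProbabilityMeasure ν₁]
    (F₀ : Icc (0:ℝ) 1 → Φ₀ → ℝ) (F₁ : Icc (0:ℝ) 1 → Φ₁ → ℝ)
    (hF₀ : Measurable (Function.uncurry F₀))
    (hF₁ : Measurable (Function.uncurry F₁))
    (hF₀range : ∀ s φ, F₀ s φ ∈ Icc (0:ℝ) 1)
    (hF₁range : ∀ s φ, F₁ s φ ∈ Icc (0:ℝ) 1)
    (fstar₀ fstar₁ : Icc (0:ℝ) 1 → ℝ)
    (hfstar₀ : Measurable fstar₀) (hfstar₁ : Measurable fstar₁)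
    (hfstar₀Range : ∀ s, fstar₀ s ∈ Icc (0:ℝ) 1)
    (hfstar₁Range : ∀ s, fstar₁ s ∈ Icc (0:ℝ) 1) :
    |((∫ φ, acc μ₁ (fun s => F₁ s φ) ∂ν₁) - (∫ φ, acc μ₀ (fun s => F₀ s φ) ∂ν₀))
        - (acc μ₁ fstar₁ - acc μ₀ fstar₀)|
      ≤ (∫ s, |(∫ φ, F₀ s φ ∂ν₀) - fstar₀ s| ∂μ₀)
        + ∫ s, |(∫ φ, F₁ s φ ∂ν₁) - fstar₁ s| ∂μ₁ := by
  open AccAux in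
  have babs : ∀ (x : ℝ), x ∈ Icc (0:ℝ) 1 → |x| ≤ 1 := fun x hx =>
    abs_le.mpr ⟨by linarith [hx.1], hx.2⟩
  have e0 : (∫ φ, acc μ₀ (fun s => F₀ s φ) ∂ν₀) = acc μ₀ (fun s => ∫ φ, F₀ s φ ∂ν₀) :=
    acc_integral_eq μ₀ ν₀ F₀ hF₀ hF₀range
  have e1 : (∫ φ, acc μ₁ (fun s => F₁ s φ) ∂ν₁) = acc μ₁ (fun s => ∫ φ, F₁ s φ ∂ν₁) :=
    acc_integral_eq μ₁ ν₁ F₁ hF₁ hF₁range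
  rw [e0, e1]
  have hbar₀m : Measurable (fun s => ∫ φ, F₀ s φ ∂ν₀) :=
    (hF₀.stronglyMeasurable.integral_prod_right').measurable
  have hbar₁m : Measurable (fun s => ∫ φ, F₁ s φ ∂ν₁) :=
    (hF₁.stronglyMeasurable.integral_prod_right').measurable
  have hbar₀b : ∀ s, |∫ φ, F₀ s φ ∂ν₀| ≤ 1 := fun s => by
    calc |∫ φ, F₀ s φ ∂ν₀| ≤ ∫ φ, |F₀ s φ| ∂ν₀ := abs_int_le _ _
      _ ≤ ∫ _φ, (1:ℝ) ∂ν₀ := integral_mono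
            (integrable_of_bdd (hF₀.comp (measurable_const.prodMk measurable_id))
              (fun φ => babs _ (hF₀range s φ))).abs
            (integrable_const 1) (fun φ => babs _ (hF₀range s φ))
      _ = 1 := by simp
  have hbar₁b : ∀ s, |∫ φ, F₁ s φ ∂ν₁| ≤ 1 := fun s => by
    calc |∫ φ, F₁ s φ ∂ν₁| ≤ ∫ φ, |F₁ s φ| ∂ν₁ := abs_int_le _ _
      _ ≤ ∫ _φ, (1:ℝ) ∂ν₁ := integral_mono
            (integrable_of_bdd (hF₁.comp (measurable_const.prodMk measurable_id))
              (fun φ => babs _ (hF₁range s φ))).abs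
            (integrable_const 1) (fun φ => babs _ (hF₁range s φ))
      _ = 1 := by simp
  have b0 : |acc μ₀ (fun s => ∫ φ, F₀ s φ ∂ν₀) - acc μ₀ fstar₀|
      ≤ ∫ s, |(∫ φ, F₀ s φ ∂ν₀) - fstar₀ s| ∂μ₀ :=
    acc_sub_abs_le μ₀ hbar₀m hbar₀b hfstar₀ (fun s => babs _ (hfstar₀Range s))
  have b1 : |acc μ₁ (fun s => ∫ φ, F₁ s φ ∂ν₁) - acc μ₁ fstar₁|
      ≤ ∫ s, |(∫ φ, F₁ s φ ∂ν₁) - fstar₁ s| ∂μ₁ :=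
    acc_sub_abs_le μ₁ hbar₁m hbar₁b hfstar₁ (fun s => babs _ (hfstar₁Range s))
  calc |(acc μ₁ (fun s => ∫ φ, F₁ s φ ∂ν₁) - acc μ₀ (fun s => ∫ φ, F₀ s φ ∂ν₀))
        - (acc μ₁ fstar₁ - acc μ₀ fstar₀)|
      = |(acc μ₀ (fun s => ∫ φ, F₀ s φ ∂ν₀) - acc μ₀ fstar₀) * (-1)
          + (acc μ₁ (fun s => ∫ φ, F₁ s φ ∂ν₁) - acc μ₁ fstar₁)| := by ring_nf
    _ ≤ |(acc μ₀ (fun s => ∫ φ, F₀ s φ ∂ν₀) - acc μ₀ fstar₀) * (-1)|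
          + |acc μ₁ (fun s => ∫ φ, F₁ s φ ∂ν₁) - acc μ₁ fstar₁| := abs_add_le _ _
    _ ≤ (∫ s, |(∫ φ, F₀ s φ ∂ν₀) - fstar₀ s| ∂μ₀)
          + ∫ s, |(∫ φ, F₁ s φ ∂ν₁) - fstar₁ s| ∂μ₁ := by
        rw [abs_mul, abs_neg, abs_one, mul_one]
        exact add_le_add b0 b1
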